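/- For every n ∈ ℕ, the number of equivalence classes of W(n) under the relation ∼ equals h_n'', the number of normalized set systems of weight n. -/

import Mathlib

/-- The weight of a set system: the sum of edge sizes, counted with multiplicity. -/
def sysWeight (H : Multiset (Finset ℕ)) : ℕ := (H.map Finset.card).sum

/-- A set system is normalized if all its edges are nonempty and its vertex set
(the union of its edges) equals `{1, …, m}` for some `m`. -/
def IsNormalized (H : Multiset (Finset ℕ)) : Prop :=
  (∀ E ∈ H, E.Nonempty) ∧ ∃ m : ℕ, H.sup = Finset.Icc 1 m

/-- `hpp n` = `hₙ''`, the number of normalized set systems (multisets of edges allowed)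
of weight `n`. -/
noncomputable def hpp (n : ℕ) : ℕ :=
  Nat.card {H : Multiset (Finset ℕ) // IsNormalized H ∧ sysWeight H = n}

/-- `hp n` = `hₙ'`, the number of simple (no repeated edges) normalized set systems
of weight `n`. -/
noncomputable def hp (n : ℕ) : ℕ :=
  Nat.card {H : Multiset (Finset ℕ) // IsNormalized H ∧ sysWeight H = n ∧ H.Nodup}

/-- The `n`-th Bell number: the number of partitions (equivalence relations)
of an `n`-element set. -/
noncomputable def bell (n : ℕ) : ℕ := Nat.card (Setoid (Fin n))

/-- Two partitions `P`, `Q` of `{1,…,n}` are orthogonal if `|A ∩ B| ≤ 1` for all blocks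
`A` of `P` and `B` of `Q`. -/
def OrthogonalSetoids {n : ℕ} (P Q : Setoid (Fin n)) : Prop :=
  ∀ A ∈ P.classes, ∀ B ∈ Q.classes, (A ∩ B).ncard ≤ 1

/-- `Q` is an interval partition if each of its blocks is a set of consecutive
elements. -/
def IsIntervalSetoid {n : ℕ} (Q : Setoid (Fin n)) : Prop :=
  ∀ B ∈ Q.classes, ∀ x y z : Fin n, x ∈ B → z ∈ B → x ≤ y → y ≤ z → y ∈ B

/-- `W n`: the set of pairs `(Q, P)` of orthogonal partitions of `{1,…,n}` with `Q` an
interval partition. -/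
def Wpairs (n : ℕ) : Type :=
  {QP : Setoid (Fin n) × Setoid (Fin n) //
    IsIntervalSetoid QP.1 ∧ OrthogonalSetoids QP.2 QP.1}

/-- The relation `∼` on `W n`: `(Q₁,P₁) ∼ (Q₂,P₂)` iff `Q₁ = Q₂` and there is a
bijection `f : P₁ → P₂` between the blocks such that every block `A` of `P₁` intersects
exactly the same blocks of `Q₁` as `f A` does. -/
def simRel {n : ℕ} (p q : Wpairs n) : Prop :=
  p.1.1 = q.1.1 ∧
  ∃ f : p.1.2.classes → q.1.2.classes, Function.Bijective f ∧
    ∀ A : p.1.2.classes, ∀ B ∈ p.1.1.classes,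
      ((A : Set (Fin n)) ∩ B).Nonempty ↔ ((f A : Set (Fin n)) ∩ B).Nonempty



namespace WAux
open Finset
attribute [local instance] Classical.propDecidable

variable {n : ℕ}

noncomputable instance (s : Setoid (Fin n)) : Fintype s.classes := Fintype.ofFinite _

def isStart (Q : Setoid (Fin n)) (x : Fin n) : Prop := ∀ y, Q y x → x ≤ y

noncomputable def lab (Q : Setoid (Fin n)) (x : Fin n) : ℕ :=
  (Finset.univ.filter fun y => y ≤ x ∧ isStart Q y).card

noncomputable def edgeOf (Q : Setoid (Fin n)) (A : Set (Fin n)) : Finset ℕ :=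
  ((Finset.univ : Finset (Fin n)).filter fun y => y ∈ A).image (lab Q)

theorem lab_mono (Q : Setoid (Fin n)) : Monotone (lab Q) := by
  intro x y hxy
  apply Finset.card_le_card
  intro z hz
  simp only [mem_filter] at *
  exact ⟨hz.1, hz.2.1.trans hxy, hz.2.2⟩

theorem isStart_zero (Q : Setoid (Fin n)) (x : Fin n) (hx : x.1 = 0) : isStart Q x := by
  intro y _
  exact le_of_eq_of_le (Fin.ext hx : x = ⟨0, x.pos⟩) (Fin.mk_le_of_le_val (Nat.zero_le _))

theorem one_le_lab (Q : Setoid (Fin n)) (x : Fin n) : 1 ≤ lab Q x := by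
  rw [lab, Nat.one_le_iff_ne_zero, ← Nat.pos_iff_ne_zero, Finset.card_pos]
  refine ⟨⟨0, x.pos⟩, ?_⟩
  simp only [mem_filter, mem_univ, true_and]
  exact ⟨Fin.mk_le_of_le_val (Nat.zero_le _), isStart_zero Q _ rfl⟩

end WAux
namespace WAux
open Finset
attribute [local instance] Classical.propDecidable
variable {n : ℕ}

theorem exists_start (Q : Setoid (Fin n)) (x : Fin n) :
    ∃ s, Q s x ∧ isStart Q s ∧ s ≤ x := by
  have hne : (Finset.univ.filter fun y => Q y x).Nonempty :=
    ⟨x, by simp only [mem_filter, mem_univ, true_and]; exact Q.refl x⟩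
  refine ⟨(Finset.univ.filter fun y => Q y x).min' hne, ?_, ?_, ?_⟩
  · have := Finset.min'_mem _ hne; simpa using this
  · intro y hy
    have hmem : (Finset.univ.filter fun y => Q y x).min' hne ∈ _ := Finset.min'_mem _ hne
    have h1 : Q ((Finset.univ.filter fun y => Q y x).min' hne) x := by simpa using hmem
    exact Finset.min'_le _ _ (by
      simp only [mem_filter, mem_univ, true_and]; exact Q.trans hy h1)
  · exact Finset.min'_le _ _ (by
      simp only [mem_filter, mem_univ, true_and]; exact Q.refl x)

theorem lab_lt_of_start_between (Q : Setoid (Fin n)) {x y s : Fin n}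
    (hs : isStart Q s) (h1 : x < s) (h2 : s ≤ y) : lab Q x < lab Q y := by
  apply Finset.card_lt_card
  constructor
  · intro z hz
    simp only [mem_filter] at *
    exact ⟨hz.1, hz.2.1.trans (h1.le.trans h2), hz.2.2⟩
  · intro hsub
    have : s ∈ Finset.univ.filter fun z => z ≤ x ∧ isStart Q z :=
      hsub (by simp [h2, hs])
    simp only [mem_filter] at this
    exact absurd this.2.1 (not_le.2 h1)

theorem lab_eq_of_rel (Q : Setoid (Fin n)) (hQ : IsIntervalSetoid Q) {x y : Fin n}
    (h : Q x y) : lab Q x = lab Q y := by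
  -- wlog
  suffices H : ∀ x y : Fin n, Q x y → x ≤ y → lab Q x = lab Q y by
    rcases le_total x y with hle | hle
    · exact H x y h hle
    · exact (H y x (Q.symm h) hle).symm
  intro x y hxy hle
  unfold lab
  congr 1
  apply Finset.ext
  intro z
  simp only [mem_filter, mem_univ, true_and]
  constructor
  · exact fun hz => ⟨hz.1.trans hle, hz.2⟩
  · rintro ⟨hzy, hz⟩
    refine ⟨?_, hz⟩
    by_contra hzx
    push_neg at hzx
    have hzB : z ∈ {w | Q w y} := hQ {w | Q w y} (Q.mem_classes y) x z y hxy (Q.refl y) hzx.le hzy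
    have : Q x z := Q.trans hxy (Q.symm hzB)
    exact absurd (hz x this) (not_le.2 hzx)

theorem rel_of_lab_eq (Q : Setoid (Fin n)) (hQ : IsIntervalSetoid Q) {x y : Fin n}
    (h : lab Q x = lab Q y) : Q x y := by
  suffices H : ∀ x y : Fin n, lab Q x = lab Q y → x ≤ y → Q x y by
    rcases le_total x y with hle | hle
    · exact H x y h hle
    · exact Q.symm (H y x h.symm hle)
  intro x y h hle
  obtain ⟨s, hsrel, hs, hsy⟩ := exists_start Q y
  by_cases hsx : s ≤ x
  · exact hQ {w | Q w y} (Q.mem_classes y) s x y hsrel (Q.refl y) hsx hle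
  · push_neg at hsx
    exact absurd h (Nat.ne_of_lt (lab_lt_of_start_between Q hs hsx hsy))

theorem lab_eq_iff (Q : Setoid (Fin n)) (hQ : IsIntervalSetoid Q) {x y : Fin n} :
    lab Q x = lab Q y ↔ Q x y :=
  ⟨rel_of_lab_eq Q hQ, lab_eq_of_rel Q hQ⟩

theorem lab_val_zero (Q : Setoid (Fin n)) (x : Fin n) (hx : x.1 = 0) : lab Q x = 1 := by
  refine le_antisymm ?_ (one_le_lab Q x)
  unfold lab
  have : (Finset.univ.filter fun z => z ≤ x ∧ isStart Q z) ⊆ {x} := by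
    intro z hz
    simp only [mem_filter] at hz
    have : z.1 ≤ x.1 := hz.2.1
    rw [hx, Nat.le_zero] at this
    simp [Finset.mem_singleton, Fin.ext_iff, this, hx]
  simpa using Finset.card_le_card this

theorem lab_succ_le (Q : Setoid (Fin n)) (x y : Fin n) (h : y.1 = x.1 + 1) :
    lab Q y ≤ lab Q x + 1 := by
  have hsub : (Finset.univ.filter fun z => z ≤ y ∧ isStart Q z) ⊆
      insert y (Finset.univ.filter fun z => z ≤ x ∧ isStart Q z) := by
    intro z hz
    simp only [mem_filter, Finset.mem_insert, mem_univ, true_and] at *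
    rcases eq_or_ne z y with rfl | hne
    · exact Or.inl rfl
    · refine Or.inr ⟨?_, hz.2⟩
      have hlt : z.1 < y.1 := lt_of_le_of_ne hz.1 (fun hh => hne (Fin.ext hh))
      rw [h] at hlt
      exact Nat.lt_succ_iff.1 hlt
  calc lab Q y ≤ (insert y (Finset.univ.filter fun z => z ≤ x ∧ isStart Q z)).card :=
        Finset.card_le_card hsub
    _ ≤ lab Q x + 1 := Finset.card_insert_le _ _

theorem lab_exists (Q : Setoid (Fin n)) :
    ∀ (k : ℕ) (x : Fin n), x.1 = k → ∀ j, 1 ≤ j → j ≤ lab Q x → ∃ y, lab Q y = j := by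
  intro k
  induction k with
  | zero =>
    intro x hx j h1 h2
    have := lab_val_zero Q x hx
    exact ⟨x, by omega⟩
  | succ k ih =>
    intro x hx j h1 h2
    have hk : k < n := by have := x.2; omega
    set x' : Fin n := ⟨k, hk⟩ with hx'
    by_cases hj : j ≤ lab Q x'
    · exact ih x' rfl j h1 hj
    · push_neg at hj
      have := lab_succ_le Q x' x (by simp [hx', hx])
      exact ⟨x, by omega⟩

end WAux

namespace WAux
open Finset
attribute [local instance] Classical.propDecidable
variable {n : ℕ}

noncomputable def Phi (p : Wpairs n) : Multiset (Finset ℕ) :=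
  Multiset.map (fun A : p.1.2.classes => edgeOf p.1.1 (A : Set (Fin n)))
    (Finset.univ : Finset p.1.2.classes).val

theorem mem_edgeOf {Q : Setoid (Fin n)} {A : Set (Fin n)} {j : ℕ} :
    j ∈ edgeOf Q A ↔ ∃ y ∈ A, lab Q y = j := by
  simp [edgeOf]

theorem class_eq_iff (P : Setoid (Fin n)) {A : Set (Fin n)} (hA : A ∈ P.classes) (x : Fin n) :
    {y | P y x} = A ↔ x ∈ A := by
  constructor
  · intro h; rw [← h]; exact P.refl x
  · intro hx
    obtain ⟨x₀, rfl⟩ := hA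
    have hxx₀ : P x x₀ := hx
    ext y
    exact ⟨fun h => P.trans h hxx₀, fun h => P.trans h (P.symm hxx₀)⟩

theorem rel_of_mem_class {P : Setoid (Fin n)} {A : Set (Fin n)} (hA : A ∈ P.classes)
    {x y : Fin n} (hx : x ∈ A) (hy : y ∈ A) : P x y := by
  obtain ⟨x₀, rfl⟩ := hA
  exact P.trans hx (P.symm hy)

/-- the class of `x` as an element of the subtype `P.classes`. -/
def cls (P : Setoid (Fin n)) (x : Fin n) : P.classes := ⟨{y | P y x}, P.mem_classes x⟩

theorem cls_eq_iff (P : Setoid (Fin n)) (x : Fin n) (A : P.classes) :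
    cls P x = A ↔ x ∈ (A : Set (Fin n)) := by
  rw [← class_eq_iff P A.2 x, cls, Subtype.ext_iff]

theorem lab_injOn_class {Q P : Setoid (Fin n)} (hQ : IsIntervalSetoid Q)
    (hO : OrthogonalSetoids P Q) {A : Set (Fin n)} (hA : A ∈ P.classes) :
    ∀ y ∈ A, ∀ z ∈ A, lab Q y = lab Q z → y = z := by
  intro y hy z hz hlab
  have hrel : Q y z := rel_of_lab_eq Q hQ hlab
  have h1 := hO A hA {w | Q w z} (Q.mem_classes z)
  rw [Set.ncard_le_one (Set.toFinite _)] at h1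
  exact h1 y (Set.mem_inter hy (show y ∈ {w | Q w z} from hrel)) z
    (Set.mem_inter hz (show z ∈ {w | Q w z} from Q.refl z))

theorem card_edgeOf {Q P : Setoid (Fin n)} (hQ : IsIntervalSetoid Q)
    (hO : OrthogonalSetoids P Q) {A : Set (Fin n)} (hA : A ∈ P.classes) :
    (edgeOf Q A).card = (Finset.univ.filter fun x => x ∈ A).card := by
  apply Finset.card_image_of_injOn
  intro y hy z hz hlab
  simp only [Finset.coe_filter, Set.mem_setOf_eq, mem_univ, true_and] at hy hz
  exact lab_injOn_class hQ hO hA y hy z hz hlab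

theorem weight_Phi (p : Wpairs n) : sysWeight (Phi p) = n := by
  obtain ⟨⟨Q, P⟩, hQ, hO⟩ := p
  have h1 : sysWeight (Phi ⟨(Q, P), hQ, hO⟩) =
      ∑ A : P.classes, (edgeOf Q (A : Set (Fin n))).card := by
    unfold Phi; rw [sysWeight, Multiset.map_map]
    rfl
  rw [h1]
  have h2 : ∀ A : P.classes, (edgeOf Q (A : Set (Fin n))).card =
      (Finset.univ.filter fun x => cls P x = A).card := by
    intro A
    rw [card_edgeOf hQ hO A.2]
    congr 1
    apply Finset.filter_congr
    intro x _
    simp [cls_eq_iff]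
  rw [Finset.sum_congr rfl fun A _ => h2 A]
  have := Finset.card_eq_sum_card_fiberwise
    (f := cls P) (s := Finset.univ) (t := Finset.univ) (fun x _ => Finset.mem_univ _)
  rw [← this, Finset.card_univ, Fintype.card_fin]

theorem normalized_Phi (hn : 1 ≤ n) (p : Wpairs n) : IsNormalized (Phi p) := by
  obtain ⟨⟨Q, P⟩, hQ, hO⟩ := p
  constructor
  · intro E hE
    unfold Phi at hE; rw [Multiset.mem_map] at hE
    obtain ⟨A, _, rfl⟩ := hE
    obtain ⟨x₀, hx₀⟩ := A.2
    refine ⟨lab Q x₀, mem_edgeOf.2 ⟨x₀, ?_, rfl⟩⟩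
    rw [hx₀]; exact P.refl x₀
  · set top : Fin n := ⟨n - 1, Nat.sub_lt hn Nat.one_pos⟩ with htop
    have hle_top : ∀ x : Fin n, x ≤ top := by
      intro x
      have := x.2
      rw [Fin.le_def]
      simp only [htop]
      omega
    refine ⟨lab Q top, le_antisymm ?_ ?_⟩
    · rw [Multiset.sup_le]
      intro E hE
      unfold Phi at hE; rw [Multiset.mem_map] at hE
      obtain ⟨A, _, rfl⟩ := hE
      rw [Finset.le_iff_subset]
      intro j hj
      obtain ⟨y, _, rfl⟩ := mem_edgeOf.1 hj
      exact Finset.mem_Icc.2 ⟨one_le_lab Q y, lab_mono Q (hle_top y)⟩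
    · rw [Finset.le_iff_subset]
      intro j hj
      rw [Finset.mem_Icc] at hj
      obtain ⟨y, hy⟩ := lab_exists Q top.1 top rfl j hj.1 hj.2
      have hmem : edgeOf Q ((cls P y : P.classes) : Set (Fin n)) ∈ Phi ⟨(Q, P), hQ, hO⟩ :=
        Multiset.mem_map.2 ⟨cls P y, Finset.mem_val.mpr (Finset.mem_univ _), rfl⟩
      have hsub := Finset.le_iff_subset.1 (Multiset.le_sup hmem)
      exact hsub (mem_edgeOf.2 ⟨y, P.refl y, hy⟩)

end WAux

namespace WAux
open Finset
attribute [local instance] Classical.propDecidable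
variable {n : ℕ}

theorem map_univ_equiv_val {α β γ : Type*} [Fintype α] [Fintype β] (e : α ≃ β) (G : β → γ) :
    Multiset.map (fun a => G (e a)) (Finset.univ : Finset α).val
      = Multiset.map G (Finset.univ : Finset β).val := by
  have h : (Finset.univ : Finset β) = (Finset.univ : Finset α).map e.toEmbedding :=
    (Finset.map_univ_equiv e).symm
  rw [h, Finset.map_val, Multiset.map_map]
  rfl

theorem exists_equiv_of_map_univ_eq {α β γ : Type*} [Fintype α] [Fintype β] [DecidableEq γ]
    (F : α → γ) (G : β → γ)
    (h : Multiset.map F (Finset.univ : Finset α).val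
      = Multiset.map G (Finset.univ : Finset β).val) :
    ∃ e : α ≃ β, ∀ a, G (e a) = F a := by
  classical
  have hcard : ∀ c : γ, Fintype.card {a // F a = c} = Fintype.card {b // G b = c} := by
    intro c
    rw [Fintype.card_subtype, Fintype.card_subtype]
    have hco := congrArg (Multiset.count c) h
    rw [Multiset.count_map, Multiset.count_map] at hco
    have e1 : (Finset.univ.filter fun a => F a = c).card
        = Multiset.card (Multiset.filter (fun a => c = F a) (Finset.univ : Finset α).val) := by
      rw [Finset.card, Finset.filter_val]
      congr 1
      apply Multiset.filter_congr
      intro x _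
      exact eq_comm
    have e2 : (Finset.univ.filter fun b => G b = c).card
        = Multiset.card (Multiset.filter (fun b => c = G b) (Finset.univ : Finset β).val) := by
      rw [Finset.card, Finset.filter_val]
      congr 1
      apply Multiset.filter_congr
      intro x _
      exact eq_comm
    rw [e1, e2, hco]
  refine ⟨Equiv.ofFiberEquiv (fun c => Fintype.equivOfCardEq (hcard c)), ?_⟩
  intro a
  exact Equiv.ofFiberEquiv_map _ a

theorem Phi_eq_of_simRel {p q : Wpairs n} (h : simRel p q) : Phi p = Phi q := by
  obtain ⟨h1, f, hfbij, hpat⟩ := h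
  have hkey : ∀ A : p.1.2.classes,
      edgeOf q.1.1 ((f A : q.1.2.classes) : Set (Fin n)) = edgeOf p.1.1 (A : Set (Fin n)) := by
    intro A
    rw [← h1]
    ext j
    rw [mem_edgeOf, mem_edgeOf]
    constructor
    · rintro ⟨z, hz, rfl⟩
      have hB : ({w | p.1.1 w z} : Set (Fin n)) ∈ p.1.1.classes := p.1.1.mem_classes z
      have hne : ((f A : Set (Fin n)) ∩ {w | p.1.1 w z}).Nonempty :=
        ⟨z, hz, p.1.1.refl z⟩
      obtain ⟨y, hyA, hyB⟩ := (hpat A _ hB).2 hne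
      exact ⟨y, hyA, lab_eq_of_rel p.1.1 p.2.1 hyB⟩
    · rintro ⟨y, hy, rfl⟩
      have hB : ({w | p.1.1 w y} : Set (Fin n)) ∈ p.1.1.classes := p.1.1.mem_classes y
      have hne : ((A : Set (Fin n)) ∩ {w | p.1.1 w y}).Nonempty :=
        ⟨y, hy, p.1.1.refl y⟩
      obtain ⟨z, hzA, hzB⟩ := (hpat A _ hB).1 hne
      exact ⟨z, hzA, lab_eq_of_rel p.1.1 p.2.1 hzB⟩
  obtain ⟨e, he⟩ : ∃ e : p.1.2.classes ≃ q.1.2.classes, ∀ A, e A = f A :=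
    ⟨Equiv.ofBijective f hfbij, fun _ => rfl⟩
  calc Phi p = Multiset.map (fun A : p.1.2.classes =>
        edgeOf q.1.1 ((e A : q.1.2.classes) : Set (Fin n))) Finset.univ.val := by
        rw [Phi]
        apply Multiset.map_congr rfl
        intro A _
        rw [he A]
        exact (hkey A).symm
    _ = Phi q := by
        rw [Phi]
        exact map_univ_equiv_val e (fun B : q.1.2.classes => edgeOf q.1.1 (B : Set (Fin n)))

end WAux

namespace WAux
open Finset
attribute [local instance] Classical.propDecidable
variable {n : ℕ}

noncomputable def deg (j : ℕ) (H : Multiset (Finset ℕ)) : ℕ :=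
  Multiset.countP (fun E => j ∈ E) H

theorem deg_Phi (p : Wpairs n) (j : ℕ) :
    deg j (Phi p) = (Finset.univ.filter fun x => lab p.1.1 x = j).card := by
  rw [deg, Phi, Multiset.countP_map, ← Finset.filter_val, ← Finset.card_def]
  symm
  apply Finset.card_bij (i := fun x _ => cls p.1.2 x)
  · intro x hx
    simp only [mem_filter, mem_univ, true_and] at hx ⊢
    exact mem_edgeOf.2 ⟨x, p.1.2.refl x, hx⟩
  · intro x hx y hy hxy
    simp only [mem_filter, mem_univ, true_and] at hx hy
    have hxmem : x ∈ ((cls p.1.2 y : p.1.2.classes) : Set (Fin n)) := by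
      rw [← hxy, cls]; exact p.1.2.refl x
    have hymem : y ∈ ((cls p.1.2 y : p.1.2.classes) : Set (Fin n)) := p.1.2.refl y
    exact lab_injOn_class p.2.1 p.2.2 (cls p.1.2 y).2 x hxmem y hymem (hx.trans hy.symm)
  · intro A hA
    simp only [mem_filter, mem_univ, true_and] at hA
    obtain ⟨y, hyA, hylab⟩ := mem_edgeOf.1 hA
    exact ⟨y, by simp only [mem_filter, mem_univ, true_and]; exact hylab,
      (cls_eq_iff p.1.2 y A).2 hyA⟩

theorem mem_downset_iff {s : Finset (Fin n)} (h : ∀ x y : Fin n, x ≤ y → y ∈ s → x ∈ s)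
    (x : Fin n) : x ∈ s ↔ x.1 < s.card := by
  constructor
  · intro hx
    have hsub : Finset.Iic x ⊆ s := fun y hy => h y x (Finset.mem_Iic.1 hy) hx
    have := Finset.card_le_card hsub
    rw [Fin.card_Iic] at this
    omega
  · intro hx
    by_contra hxs
    have hsub : s ⊆ Finset.Iio x := by
      intro y hy
      rw [Finset.mem_Iio]
      rcases lt_or_ge y x with h' | h'
      · exact h'
      · exact absurd (h x y h' hy) hxs
    have := Finset.card_le_card hsub
    rw [Fin.card_Iio] at this
    omega

theorem card_lab_le (Q : Setoid (Fin n)) (j : ℕ) :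
    (Finset.univ.filter fun x => lab Q x ≤ j).card
      = ∑ i ∈ Finset.Icc 1 j, (Finset.univ.filter fun x => lab Q x = i).card := by
  rw [Finset.card_eq_sum_card_fiberwise (f := lab Q) (t := Finset.Icc 1 j)
    (fun x hx => Finset.mem_Icc.2 ⟨one_le_lab Q x, (Finset.mem_filter.1 hx).2⟩)]
  apply Finset.sum_congr rfl
  intro i hi
  congr 1
  ext x
  simp only [mem_filter, mem_univ, true_and]
  rw [Finset.mem_Icc] at hi
  constructor
  · exact fun hh => hh.2
  · intro hh; exact ⟨hh ▸ hi.2, hh⟩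

theorem lab_eq_of_fib_eq {Q₁ Q₂ : Setoid (Fin n)}
    (h : ∀ i, (Finset.univ.filter fun x => lab Q₁ x = i).card
      = (Finset.univ.filter fun x => lab Q₂ x = i).card) (x : Fin n) :
    lab Q₁ x = lab Q₂ x := by
  have key : ∀ (j : ℕ) (x : Fin n), lab Q₁ x ≤ j ↔ lab Q₂ x ≤ j := by
    intro j x
    have h1 := mem_downset_iff (s := Finset.univ.filter fun y => lab Q₁ y ≤ j)
      (fun a b hab hb => by
        simp only [mem_filter, mem_univ, true_and] at hb ⊢
        exact le_trans (lab_mono Q₁ hab) hb) x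
    have h2 := mem_downset_iff (s := Finset.univ.filter fun y => lab Q₂ y ≤ j)
      (fun a b hab hb => by
        simp only [mem_filter, mem_univ, true_and] at hb ⊢
        exact le_trans (lab_mono Q₂ hab) hb) x
    simp only [mem_filter, mem_univ, true_and] at h1 h2
    rw [h1, h2, card_lab_le, card_lab_le, Finset.sum_congr rfl fun i _ => h i]
  exact le_antisymm ((key (lab Q₂ x) x).2 le_rfl) ((key (lab Q₁ x) x).1 le_rfl)

theorem lab_eq_of_Phi_eq {p q : Wpairs n} (h : Phi p = Phi q) (x : Fin n) :
    lab p.1.1 x = lab q.1.1 x := by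
  apply lab_eq_of_fib_eq
  intro i
  rw [← deg_Phi p i, ← deg_Phi q i, h]

theorem Q_eq_of_Phi_eq {p q : Wpairs n} (h : Phi p = Phi q) : p.1.1 = q.1.1 := by
  apply Setoid.ext
  intro x y
  rw [← lab_eq_iff p.1.1 p.2.1, ← lab_eq_iff q.1.1 q.2.1,
    lab_eq_of_Phi_eq h x, lab_eq_of_Phi_eq h y]

theorem nonempty_inter_iff {Q : Setoid (Fin n)} (hQ : IsIntervalSetoid Q)
    (A : Set (Fin n)) (b : Fin n) :
    (A ∩ {w | Q w b}).Nonempty ↔ lab Q b ∈ edgeOf Q A := by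
  rw [mem_edgeOf]
  constructor
  · rintro ⟨y, hyA, hyB⟩
    exact ⟨y, hyA, lab_eq_of_rel Q hQ hyB⟩
  · rintro ⟨y, hyA, hylab⟩
    exact ⟨y, hyA, rel_of_lab_eq Q hQ hylab⟩

theorem simRel_of_Phi_eq {p q : Wpairs n} (h : Phi p = Phi q) : simRel p q := by
  have hQ := Q_eq_of_Phi_eq h
  obtain ⟨⟨Q1, P1⟩, hq1, ho1⟩ := p
  obtain ⟨⟨Q2, P2⟩, hq2, ho2⟩ := q
  simp only at hQ
  subst hQ
  obtain ⟨e, he⟩ := exists_equiv_of_map_univ_eq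
    (F := fun A : P1.classes => edgeOf Q1 (A : Set (Fin n)))
    (G := fun A : P2.classes => edgeOf Q1 (A : Set (Fin n))) h
  refine ⟨rfl, e, e.bijective, ?_⟩
  intro A B hB
  obtain ⟨b, rfl⟩ := hB
  rw [nonempty_inter_iff hq1, nonempty_inter_iff hq1, he A]

end WAux

namespace WAux
open Finset
attribute [local instance] Classical.propDecidable
variable {n : ℕ}

def Ed (l : List (Finset ℕ)) (i : ℕ) : Finset ℕ := l.getD i ∅

def inc (l : List (Finset ℕ)) (m : ℕ) : List (ℕ × ℕ) :=
  (List.range' 1 m).flatMap fun j =>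
    ((List.range l.length).filter fun i => decide (j ∈ Ed l i)).map fun i => (i, j)

theorem mem_inc {l : List (Finset ℕ)} {m : ℕ} {i j : ℕ} :
    (i, j) ∈ inc l m ↔ (1 ≤ j ∧ j < 1 + m) ∧ i < l.length ∧ j ∈ Ed l i := by
  simp only [inc, List.mem_flatMap, List.mem_map, List.mem_filter, List.mem_range,
    List.mem_range'_1, decide_eq_true_eq, Prod.mk.injEq]
  constructor
  · rintro ⟨j', hj', i', ⟨hi', hmem⟩, rfl, rfl⟩
    exact ⟨hj', hi', hmem⟩
  · rintro ⟨hj, hi, hmem⟩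
    exact ⟨j, hj, i, ⟨hi, hmem⟩, rfl, rfl⟩

theorem Ed_subset {l : List (Finset ℕ)} {m : ℕ}
    (hsup : (↑l : Multiset (Finset ℕ)).sup = Finset.Icc 1 m) {i : ℕ} (hi : i < l.length) :
    Ed l i ⊆ Finset.Icc 1 m := by
  rw [← hsup]
  have hmem : Ed l i ∈ (↑l : Multiset (Finset ℕ)) := by
    rw [Ed, List.getD_eq_get _ _ ⟨i, hi⟩, Multiset.mem_coe]
    exact List.get_mem l ⟨i, hi⟩
  exact Finset.le_iff_subset.1 (Multiset.le_sup hmem)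

theorem mem_inc' {l : List (Finset ℕ)} {m : ℕ}
    (hsup : (↑l : Multiset (Finset ℕ)).sup = Finset.Icc 1 m) {i j : ℕ} :
    (i, j) ∈ inc l m ↔ i < l.length ∧ j ∈ Ed l i := by
  rw [mem_inc]
  constructor
  · rintro ⟨_, h⟩; exact h
  · rintro ⟨hi, hj⟩
    have := Finset.mem_Icc.1 (Ed_subset hsup hi hj)
    exact ⟨⟨this.1, by omega⟩, hi, hj⟩

theorem pairwise_inc (l : List (Finset ℕ)) (m : ℕ) :
    (inc l m).Pairwise fun a b => a.2 < b.2 ∨ (a.2 = b.2 ∧ a.1 ≠ b.1) := by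
  rw [inc, List.flatMap_def, List.pairwise_flatten]
  refine ⟨?_, ?_⟩
  · intro c hc
    rw [List.mem_map] at hc
    obtain ⟨j, _, rfl⟩ := hc
    rw [List.pairwise_map]
    apply List.Pairwise.imp ?_ (List.pairwise_lt_range.filter _)
    intro a b hab
    exact Or.inr ⟨rfl, Nat.ne_of_lt hab⟩
  · rw [List.pairwise_map]
    apply List.Pairwise.imp ?_ (List.pairwise_lt_range' (s := 1) (n := m))
    intro a b hab x hx y hy
    rw [List.mem_map] at hx hy
    obtain ⟨i1, _, rfl⟩ := hx
    obtain ⟨i2, _, rfl⟩ := hy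
    exact Or.inl hab

theorem nodup_inc (l : List (Finset ℕ)) (m : ℕ) : (inc l m).Nodup := by
  apply List.Pairwise.imp ?_ (pairwise_inc l m)
  rintro a b (h | h)
  · intro hab; rw [hab] at h; omega
  · intro hab; rw [hab] at h; exact h.2 rfl

theorem snd_le_inc (l : List (Finset ℕ)) (m : ℕ) :
    (inc l m).Pairwise fun a b => a.2 ≤ b.2 := by
  apply List.Pairwise.imp ?_ (pairwise_inc l m)
  rintro a b (h | h)
  · omega
  · omega

def eFun (l : List (Finset ℕ)) (m : ℕ) (x : Fin n) : ℕ × ℕ :=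
  (inc l m).getD x.1 (0, 0)

def PsiQ (l : List (Finset ℕ)) (m : ℕ) : Setoid (Fin n) :=
  Setoid.ker fun x : Fin n => (eFun l m x).2

def PsiP (l : List (Finset ℕ)) (m : ℕ) : Setoid (Fin n) :=
  Setoid.ker fun x : Fin n => (eFun l m x).1

theorem psiQ_rel {l : List (Finset ℕ)} {m : ℕ} {x y : Fin n} :
    PsiQ l m x y ↔ (eFun l m x).2 = (eFun l m y).2 := Iff.rfl

theorem psiP_rel {l : List (Finset ℕ)} {m : ℕ} {x y : Fin n} :
    PsiP l m x y ↔ (eFun l m x).1 = (eFun l m y).1 := Iff.rfl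

section WithLen

variable {l : List (Finset ℕ)} {m : ℕ} (hlen : (inc l m).length = n)
include hlen

theorem eFun_eq_get (x : Fin n) :
    eFun l m x = (inc l m).get ⟨x.1, by rw [hlen]; exact x.2⟩ :=
  List.getD_eq_get (inc l m) (0, 0) ⟨x.1, by rw [hlen]; exact x.2⟩

theorem eFun_mem (x : Fin n) : eFun l m x ∈ inc l m := by
  rw [eFun_eq_get hlen]
  exact List.get_mem _ _

theorem eFun_inj {x y : Fin n} (h : eFun l m x = eFun l m y) : x = y := by
  rw [eFun_eq_get hlen, eFun_eq_get hlen] at h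
  have := List.nodup_iff_injective_get.1 (nodup_inc l m) h
  rw [Fin.mk.injEq] at this
  exact Fin.ext this

theorem eFun_snd_mono {x y : Fin n} (h : x ≤ y) : (eFun l m x).2 ≤ (eFun l m y).2 := by
  rcases eq_or_lt_of_le h with rfl | hlt
  · exact le_rfl
  · rw [eFun_eq_get hlen, eFun_eq_get hlen]
    exact List.pairwise_iff_get.1 (snd_le_inc l m) _ _ hlt

theorem eFun_surj {i j : ℕ} (h : (i, j) ∈ inc l m) : ∃ x : Fin n, eFun l m x = (i, j) := by
  obtain ⟨k, hk⟩ := List.mem_iff_get.1 h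
  refine ⟨⟨k.1, by rw [← hlen]; exact k.2⟩, ?_⟩
  rw [eFun_eq_get hlen]
  simpa using hk

theorem interval_psiQ : IsIntervalSetoid (PsiQ l m : Setoid (Fin n)) := by
  rintro B ⟨b, rfl⟩ x y z hx hz hxy hyz
  have h1 : (eFun l m x).2 ≤ (eFun l m y).2 := eFun_snd_mono hlen hxy
  have h2 : (eFun l m y).2 ≤ (eFun l m z).2 := eFun_snd_mono hlen hyz
  have hxb : (eFun l m x).2 = (eFun l m b).2 := hx
  have hzb : (eFun l m z).2 = (eFun l m b).2 := hz
  show (eFun l m y).2 = (eFun l m b).2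
  omega

theorem orth_psi : OrthogonalSetoids (PsiP l m : Setoid (Fin n)) (PsiQ l m) := by
  rintro A ⟨a, rfl⟩ B ⟨b, rfl⟩
  rw [Set.ncard_le_one (Set.toFinite _)]
  rintro x ⟨hx1, hx2⟩ y ⟨hy1, hy2⟩
  apply eFun_inj hlen
  have e1 : (eFun l m x).1 = (eFun l m y).1 := by
    have h1 : (eFun l m x).1 = (eFun l m a).1 := hx1
    have h2 : (eFun l m y).1 = (eFun l m a).1 := hy1
    omega
  have e2 : (eFun l m x).2 = (eFun l m y).2 := by
    have h1 : (eFun l m x).2 = (eFun l m b).2 := hx2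
    have h2 : (eFun l m y).2 = (eFun l m b).2 := hy2
    omega
  exact Prod.ext e1 e2

end WithLen

end WAux

namespace WAux
open Finset
attribute [local instance] Classical.propDecidable
variable {n : ℕ}

theorem mem_msup {s : Multiset (Finset ℕ)} {a : ℕ} : a ∈ s.sup ↔ ∃ E ∈ s, a ∈ E := by
  induction s using Multiset.induction_on with
  | empty => simp [Multiset.sup_zero]
  | cons E s ih =>
    simp only [Multiset.sup_cons, Finset.sup_eq_union, Finset.mem_union, ih, Multiset.mem_cons]
    constructor
    · rintro (h | ⟨F, hF, ha⟩)
      · exact ⟨E, Or.inl rfl, h⟩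
      · exact ⟨F, Or.inr hF, ha⟩
    · rintro ⟨F, (rfl | hF), ha⟩
      · exact Or.inl ha
      · exact Or.inr ⟨F, hF, ha⟩

section WithLen2

variable {l : List (Finset ℕ)} {m : ℕ} (hlen : (inc l m).length = n)
  (hsup : (↑l : Multiset (Finset ℕ)).sup = Finset.Icc 1 m)
include hlen

theorem e2_bounds (x : Fin n) : 1 ≤ (eFun l m x).2 ∧ (eFun l m x).2 ≤ m := by
  have h := eFun_mem hlen x
  rw [show eFun l m x = ((eFun l m x).1, (eFun l m x).2) from rfl, mem_inc] at h
  exact ⟨h.1.1, by omega⟩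

include hsup

theorem e2_surj {j : ℕ} (h1 : 1 ≤ j) (h2 : j ≤ m) : ∃ x : Fin n, (eFun l m x).2 = j := by
  have hj : j ∈ (↑l : Multiset (Finset ℕ)).sup := by
    rw [hsup]; exact Finset.mem_Icc.2 ⟨h1, h2⟩
  obtain ⟨E, hE, hjE⟩ := mem_msup.1 hj
  rw [Multiset.mem_coe] at hE
  obtain ⟨k, rfl⟩ := List.mem_iff_get.1 hE
  have hk : (k.1, j) ∈ inc l m := by
    rw [mem_inc' hsup]
    refine ⟨k.2, ?_⟩
    rw [Ed, List.getD_eq_get _ _ k]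
    simpa using hjE
  obtain ⟨x, hx⟩ := eFun_surj hlen hk
  exact ⟨x, by rw [hx]⟩

theorem lab_eq_snd : ∀ (k : ℕ) (x : Fin n), x.1 = k →
    lab (PsiQ l m : Setoid (Fin n)) x = (eFun l m x).2 := by
  intro k
  induction k with
  | zero =>
    intro x hx
    rw [lab_val_zero _ x hx]
    have hb := e2_bounds hlen x
    obtain ⟨y, hy⟩ := e2_surj hlen hsup (j := 1) le_rfl (by omega)
    have hxy : x ≤ y := by
      rw [Fin.le_def, hx]; omega
    have := eFun_snd_mono hlen hxy
    omega
  | succ k ih =>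
    intro x hx
    have hk : k < n := by have := x.2; omega
    set x' : Fin n := ⟨k, hk⟩ with hx'def
    have hx'x : x' ≤ x := by rw [Fin.le_def, hx]; simp [hx'def]
    by_cases hstart : isStart (PsiQ l m : Setoid (Fin n)) x
    · -- lab x = lab x' + 1 and e2 x = e2 x' + 1
      have hlab : lab (PsiQ l m : Setoid (Fin n)) x
          = lab (PsiQ l m : Setoid (Fin n)) x' + 1 := by
        have hfil : (Finset.univ.filter fun z => z ≤ x ∧ isStart (PsiQ l m : Setoid (Fin n)) z)
            = insert x (Finset.univ.filter fun z =>
                z ≤ x' ∧ isStart (PsiQ l m : Setoid (Fin n)) z) := by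
          ext z
          simp only [mem_filter, mem_univ, true_and, Finset.mem_insert]
          constructor
          · rintro ⟨hzx, hzs⟩
            rcases eq_or_ne z x with rfl | hne
            · exact Or.inl rfl
            · refine Or.inr ⟨?_, hzs⟩
              rw [Fin.le_def] at hzx ⊢
              have : z.1 ≠ x.1 := fun hh => hne (Fin.ext hh)
              simp only [hx'def]
              omega
          · rintro (rfl | ⟨hzx, hzs⟩)
            · exact ⟨le_refl _, hstart⟩
            · exact ⟨hzx.trans hx'x, hzs⟩
        rw [lab, hfil, Finset.card_insert_of_notMem, lab]
        simp only [mem_filter, mem_univ, true_and, not_and]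
        intro hxx'
        rw [Fin.le_def] at hxx'
        simp only [hx'def] at hxx'
        omega
      have he2 : (eFun l m x).2 = (eFun l m x').2 + 1 := by
        have hne : (eFun l m x').2 ≠ (eFun l m x).2 := by
          intro hh
          have := hstart x' hh
          rw [Fin.le_def] at this
          simp only [hx'def] at this
          omega
        have hmono := eFun_snd_mono hlen hx'x
        have hlt : (eFun l m x').2 < (eFun l m x).2 := by omega
        by_contra hne2
        have hskip : (eFun l m x').2 + 1 < (eFun l m x).2 := by omega
        have hb := e2_bounds hlen x
        have hb' := e2_bounds hlen x'
        obtain ⟨y, hy⟩ := e2_surj hlen hsup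
          (j := (eFun l m x').2 + 1) (by omega) (by omega)
        rcases le_or_gt y x' with hyx' | hx'y
        · have := eFun_snd_mono hlen hyx'
          omega
        · have hxy : x ≤ y := by
            rw [Fin.lt_def] at hx'y
            rw [Fin.le_def]
            simp only [hx'def] at hx'y
            omega
          have := eFun_snd_mono hlen hxy
          omega
      rw [hlab, he2, ih x' rfl]
    · -- not a start: lab x = lab x', e2 x = e2 x'
      rw [isStart] at hstart
      push_neg at hstart
      obtain ⟨z, hzrel, hzlt⟩ := hstart
      have hzx' : z ≤ x' := by
        rw [Fin.lt_def] at hzlt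
        rw [Fin.le_def]
        simp only [hx'def]
        omega
      have he2 : (eFun l m x).2 = (eFun l m x').2 := by
        have h1 : (eFun l m z).2 = (eFun l m x).2 := hzrel
        have h2 := eFun_snd_mono hlen hzx'
        have h3 := eFun_snd_mono hlen hx'x
        omega
      have hlab : lab (PsiQ l m : Setoid (Fin n)) x
          = lab (PsiQ l m : Setoid (Fin n)) x' := by
        rw [lab, lab]
        congr 1
        ext w
        simp only [mem_filter, mem_univ, true_and]
        constructor
        · rintro ⟨hwx, hws⟩
          refine ⟨?_, hws⟩
          have hne : w ≠ x := by
            rintro rfl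
            have := hws z hzrel
            rw [Fin.le_def] at this
            rw [Fin.lt_def] at hzlt
            omega
          rw [Fin.le_def] at hwx ⊢
          have : w.1 ≠ x.1 := fun hh => hne (Fin.ext hh)
          simp only [hx'def]
          omega
        · rintro ⟨hwx, hws⟩
          exact ⟨hwx.trans hx'x, hws⟩
      rw [hlab, he2, ih x' rfl]

theorem edge_psi (x : Fin n) :
    edgeOf (PsiQ l m : Setoid (Fin n)) {w | PsiP l m w x} = Ed l (eFun l m x).1 := by
  ext j
  rw [mem_edgeOf]
  constructor
  · rintro ⟨y, hy, rfl⟩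
    rw [lab_eq_snd hlen hsup y.1 y rfl]
    have hmem := eFun_mem hlen y
    rw [show eFun l m y = ((eFun l m y).1, (eFun l m y).2) from rfl, mem_inc' hsup] at hmem
    have h1 : (eFun l m y).1 = (eFun l m x).1 := hy
    rw [← h1]
    exact hmem.2
  · intro hj
    have hx1 : (eFun l m x).1 < l.length := by
      have hmem := eFun_mem hlen x
      rw [show eFun l m x = ((eFun l m x).1, (eFun l m x).2) from rfl, mem_inc' hsup] at hmem
      exact hmem.1
    have hpair : ((eFun l m x).1, j) ∈ inc l m := (mem_inc' hsup).2 ⟨hx1, hj⟩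
    obtain ⟨y, hy⟩ := eFun_surj hlen hpair
    refine ⟨y, ?_, ?_⟩
    · show (eFun l m y).1 = (eFun l m x).1
      rw [hy]
    · rw [lab_eq_snd hlen hsup y.1 y rfl, hy]

end WithLen2

end WAux

namespace WAux
open Finset
attribute [local instance] Classical.propDecidable
variable {n : ℕ}

theorem list_range_sum (f : ℕ → ℕ) (k : ℕ) :
    ((List.range k).map f).sum = ∑ i ∈ Finset.range k, f i := by
  induction k with
  | zero => simp
  | succ k ih =>
    rw [List.range_succ, List.map_append, List.sum_append, Finset.sum_range_succ, ih]
    simp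

theorem list_range_filter_len (p : ℕ → Prop) [DecidablePred p] (k : ℕ) :
    ((List.range k).filter fun i => decide (p i)).length = ((Finset.range k).filter p).card := by
  induction k with
  | zero => simp
  | succ k ih =>
    rw [List.range_succ, List.filter_append, List.length_append, Finset.range_add_one,
      Finset.filter_insert]
    by_cases h : p k
    · rw [if_pos h, Finset.card_insert_of_notMem (by simp), ← ih]
      simp [h]
    · rw [if_neg h, ← ih]
      simp [h]

theorem inc_length {l : List (Finset ℕ)} {m : ℕ}
    (hsup : (↑l : Multiset (Finset ℕ)).sup = Finset.Icc 1 m) :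
    (inc l m).length = sysWeight (↑l : Multiset (Finset ℕ)) := by
  classical
  rw [inc, List.length_flatMap, List.range'_eq_map_range, List.map_map]
  have h1 : ((List.range m).map
      ((List.length ∘ fun j => ((List.range l.length).filter
        fun i => decide (j ∈ Ed l i)).map fun i => (i, j)) ∘ (1 + ·))).sum
      = ∑ jm1 ∈ Finset.range m,
          ((Finset.range l.length).filter fun i => (1 + jm1) ∈ Ed l i).card := by
    rw [list_range_sum]
    apply Finset.sum_congr rfl
    intro jm1 _
    simp only [Function.comp_apply, List.length_map]
    exact list_range_filter_len _ _
  refine h1.trans ?_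
  have h2 : ∀ jm1 ∈ Finset.range m,
      ((Finset.range l.length).filter fun i => (1 + jm1) ∈ Ed l i).card
        = ∑ i ∈ Finset.range l.length, if (1 + jm1) ∈ Ed l i then 1 else 0 := by
    intro jm1 _
    rw [Finset.card_filter]
  rw [Finset.sum_congr rfl h2, Finset.sum_comm]
  have h3 : ∀ i ∈ Finset.range l.length,
      (∑ jm1 ∈ Finset.range m, if (1 + jm1) ∈ Ed l i then 1 else 0) = (Ed l i).card := by
    intro i hi
    rw [← Finset.card_filter]
    apply Finset.card_bij (i := fun jm1 _ => 1 + jm1)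
    · intro a ha
      exact (Finset.mem_filter.1 ha).2
    · intro a _ b _ hab
      omega
    · intro j hj
      have hIcc := Finset.mem_Icc.1 (Ed_subset hsup (Finset.mem_range.1 hi) hj)
      refine ⟨j - 1, ?_, by omega⟩
      rw [Finset.mem_filter, Finset.mem_range]
      constructor
      · omega
      · rw [show 1 + (j - 1) = j by omega]
        exact hj
  rw [Finset.sum_congr rfl h3]
  have h4 : l.map Finset.card = (List.range l.length).map fun i => (Ed l i).card := by
    apply List.ext_getElem (by simp)
    intro i h1 h2
    simp only [List.getElem_map, List.getElem_range]
    congr 1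
    rw [Ed, List.getD_eq_getElem]
  rw [sysWeight, Multiset.map_coe, Multiset.sum_coe, h4, list_range_sum]

theorem Phi_psi {l : List (Finset ℕ)} {m : ℕ}
    (hlen : (inc l m).length = n)
    (hsup : (↑l : Multiset (Finset ℕ)).sup = Finset.Icc 1 m)
    (hne : ∀ E ∈ (↑l : Multiset (Finset ℕ)), Finset.Nonempty E)
    (hint : IsIntervalSetoid (PsiQ l m : Setoid (Fin n)))
    (horth : OrthogonalSetoids (PsiP l m : Setoid (Fin n)) (PsiQ l m)) :
    Phi (⟨(PsiQ l m, PsiP l m), hint, horth⟩ : Wpairs n) = (↑l : Multiset (Finset ℕ)) := by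
  classical
  have hfst : ∀ x : Fin n, (eFun l m x).1 < l.length := by
    intro x
    have hmem := eFun_mem hlen x
    rw [show eFun l m x = ((eFun l m x).1, (eFun l m x).2) from rfl, mem_inc' hsup] at hmem
    exact hmem.1
  have hrep : ∀ A : (PsiP l m : Setoid (Fin n)).classes,
      ∃ a : Fin n, (A : Set (Fin n)) = {w | PsiP l m w a} := fun A => A.2
  choose rep hrepspec using hrep
  obtain ⟨g, hg⟩ : ∃ g : (PsiP l m : Setoid (Fin n)).classes → Fin l.length,
      ∀ A, (g A).1 = (eFun l m (rep A)).1 :=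
    ⟨fun A => ⟨(eFun l m (rep A)).1, hfst (rep A)⟩, fun _ => rfl⟩
  have hgbij : Function.Bijective g := by
    constructor
    · intro A B hAB
      have h1 : (eFun l m (rep A)).1 = (eFun l m (rep B)).1 := by
        rw [← hg A, ← hg B, hAB]
      apply Subtype.ext
      rw [hrepspec A, hrepspec B]
      ext w
      exact ⟨fun hw => (h1 ▸ hw : (eFun l m w).1 = (eFun l m (rep B)).1),
        fun hw => (h1.symm ▸ hw : (eFun l m w).1 = (eFun l m (rep A)).1)⟩
    · intro i
      have hget : Ed l i.1 ∈ (↑l : Multiset (Finset ℕ)) := by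
        rw [Ed, List.getD_eq_get _ _ i, Multiset.mem_coe]
        exact List.get_mem _ _
      obtain ⟨j, hj⟩ := hne _ hget
      have hpair : (i.1, j) ∈ inc l m := (mem_inc' hsup).2 ⟨i.2, hj⟩
      obtain ⟨x, hx⟩ := eFun_surj hlen hpair
      refine ⟨⟨{w | PsiP l m w x}, (PsiP l m).mem_classes x⟩, ?_⟩
      apply Fin.ext
      rw [hg]
      have hxmem : x ∈ ({w | PsiP l m w x} : Set (Fin n)) := (PsiP l m).refl x
      have hspec := hrepspec ⟨{w | PsiP l m w x}, (PsiP l m).mem_classes x⟩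
      rw [Subtype.coe_mk] at hspec
      have hPx : x ∈ {w | PsiP l m w (rep ⟨{w | PsiP l m w x}, (PsiP l m).mem_classes x⟩)} := by
        rw [← hspec]; exact hxmem
      have hPx' : (eFun l m x).1
          = (eFun l m (rep ⟨{w | PsiP l m w x}, (PsiP l m).mem_classes x⟩)).1 := hPx
      rw [← hPx', hx]
  obtain ⟨e, he⟩ : ∃ e : (PsiP l m : Setoid (Fin n)).classes ≃ Fin l.length,
      ∀ A, e A = g A := ⟨Equiv.ofBijective g hgbij, fun _ => rfl⟩
  calc Phi (⟨(PsiQ l m, PsiP l m), hint, horth⟩ : Wpairs n)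
      = Multiset.map (fun A : (PsiP l m : Setoid (Fin n)).classes =>
          Ed l (e A).1) (Finset.univ : Finset (PsiP l m : Setoid (Fin n)).classes).val := by
        unfold Phi
        apply Multiset.map_congr rfl
        intro A _
        rw [he A, hg A, hrepspec A]
        exact edge_psi hlen hsup (rep A)
    _ = Multiset.map (fun i : Fin l.length => Ed l i.1)
          (Finset.univ : Finset (Fin l.length)).val :=
        map_univ_equiv_val e (fun i : Fin l.length => Ed l i.1)
    _ = (↑l : Multiset (Finset ℕ)) := by
        rw [Fin.univ_def]
        show Multiset.map _ (↑(List.finRange l.length) : Multiset (Fin l.length)) = _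
        rw [Multiset.map_coe]
        congr 1
        have h5 : ∀ i : Fin l.length, Ed l i.1 = l.get i := fun i => List.getD_eq_get l ∅ i
        rw [List.map_congr_left fun i _ => h5 i, List.map_get_finRange]

end WAux

namespace WAux
open Finset
attribute [local instance] Classical.propDecidable
variable {n : ℕ}

theorem Phi_surj (H : Multiset (Finset ℕ)) (hnorm : IsNormalized H)
    (hw : sysWeight H = n) : ∃ p : Wpairs n, Phi p = H := by
  obtain ⟨hne, m, hsupH⟩ := hnorm
  have hl : (↑H.toList : Multiset (Finset ℕ)) = H := Multiset.coe_toList H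
  have hsup : (↑H.toList : Multiset (Finset ℕ)).sup = Finset.Icc 1 m := by rw [hl, hsupH]
  have hlen : (inc H.toList m).length = n := by rw [inc_length hsup, hl, hw]
  have hne' : ∀ E ∈ (↑H.toList : Multiset (Finset ℕ)), Finset.Nonempty E := by
    rw [hl]; exact hne
  exact ⟨⟨(PsiQ H.toList m, PsiP H.toList m), interval_psiQ hlen, orth_psi hlen⟩,
    (Phi_psi hlen hsup hne' (interval_psiQ hlen) (orth_psi hlen)).trans hl⟩

end WAux

noncomputable def WAux.Fmap (n : ℕ) (hn : 1 ≤ n) :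
    Quot (@simRel n) → {H : Multiset (Finset ℕ) // IsNormalized H ∧ sysWeight H = n} :=
  Quot.lift (fun p => ⟨WAux.Phi p, WAux.normalized_Phi hn p, WAux.weight_Phi p⟩)
    (fun p q hpq => Subtype.ext (WAux.Phi_eq_of_simRel hpq))

theorem card_quotient_W_eq_hpp' (n : ℕ) (hn : 1 ≤ n) :
    Nat.card (Quot (@simRel n)) = hpp n := by
  classical
  have hbij : Function.Bijective (WAux.Fmap n hn) := by
    constructor
    · intro a b h
      obtain ⟨p, rfl⟩ := Quot.exists_rep a
      obtain ⟨q, rfl⟩ := Quot.exists_rep b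
      have h' : WAux.Phi p = WAux.Phi q := congrArg Subtype.val h
      exact Quot.sound (WAux.simRel_of_Phi_eq h')
    · rintro ⟨H, hH⟩
      obtain ⟨p, hp⟩ := WAux.Phi_surj H hH.1 hH.2
      refine ⟨Quot.mk _ p, ?_⟩
      exact Subtype.ext (hp : WAux.Phi p = H)
  rw [hpp]
  exact Nat.card_eq_of_bijective (WAux.Fmap n hn) hbij

/-- For every `n ∈ ℕ = {1,2,…}`, the number of equivalence classes of `W n` under `∼`
equals `hₙ''`, the number of normalized set systems of weight `n`. -/
theorem card_quotient_W_eq_hpp (n : ℕ) (hn : 1 ≤ n) :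
    Nat.card (Quot (@simRel n)) = hpp n := by
  exact card_quotient_W_eq_hpp' n hn
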